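/- Let κ ≥ 1, d ≥ 1, and 0 < λ̲ < λ̄ < 1, and let α' > 0. Then there exist K ∈ ℕ and τ > 0 such that for any sequence {D_i} in GL(d,ℝ) with λ̲ ≤ m(D_i) ≤ ‖D_i‖ ≤ λ̄ for all i, and such that every block product D_{i+K}⋯D_{i+1} is κ²-conformal, one has (‖D_{i+K}⋯D_{i+1}‖ + τ)^(1+α') ≤ |det(D_{i+K}⋯D_{i+1})|^(1/d) for every i ≥ 0. -/

import Mathlib

noncomputable section

abbrev Euc (d : ℕ) := EuclideanSpace ℝ (Fin d)

/-- An invertible linear map `D` of `ℝ^d` is `κ`-conformal if `‖D‖ · ‖D⁻¹‖ ≤ κ`. -/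
def IsConformal {d : ℕ} (κ : ℝ) (D : Euc d ≃L[ℝ] Euc d) : Prop :=
  ‖(D : Euc d →L[ℝ] Euc d)‖ * ‖(D.symm : Euc d →L[ℝ] Euc d)‖ ≤ κ

/-- The co-norm `m(T) = inf {‖T v‖ : ‖v‖ = 1}` of a linear map. -/
def conorm {d : ℕ} (T : Euc d →L[ℝ] Euc d) : ℝ :=
  sInf ((fun v => ‖T v‖) '' {v : Euc d | ‖v‖ = 1})

/-- `blockProd D i k = D_{i+k} ∘ ⋯ ∘ D_{i+1}`. -/
def blockProd {d : ℕ} (D : ℕ → (Euc d ≃L[ℝ] Euc d)) (i : ℕ) : ℕ → (Euc d ≃L[ℝ] Euc d)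
  | 0 => ContinuousLinearEquiv.refl ℝ (Euc d)
  | k + 1 => (blockProd D i k).trans (D (i + k + 1))

/-- Determinant of an invertible continuous linear map. -/
def cdet {d : ℕ} (e : Euc d ≃L[ℝ] Euc d) : ℝ :=
  LinearMap.det ((e : Euc d →L[ℝ] Euc d).toLinearMap)

/-- Given `κ ≥ 1`, `d ≥ 1`, `0 < λ̲ < λ̄ < 1`, `α' > 0`, there are `K ∈ ℕ`,
`τ > 0` such that for any sequence `{D_i}` in `GL(d,ℝ)` with
`λ̲ ≤ m(D_i) ≤ ‖D_i‖ ≤ λ̄` whose `K`-block products `D_{i+K}⋯D_{i+1}` are all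
`κ²`-conformal, one has `(‖D_{i+K}⋯D_{i+1}‖ + τ)^(1+α') ≤ |det(D_{i+K}⋯D_{i+1})|^(1/d)`. -/

lemma coord_le_norm {d : ℕ} (v : Euc d) (i : Fin d) : |v i| ≤ ‖v‖ := by
  rw [EuclideanSpace.norm_eq]
  rw [show |v i| = Real.sqrt (‖v i‖^2) by rw [Real.sqrt_sq_eq_abs]; simp]
  apply Real.sqrt_le_sqrt
  exact Finset.single_le_sum (f := fun j => ‖v j‖^2) (fun j _ => sq_nonneg _) (Finset.mem_univ i)

lemma det_le_fact_norm {d : ℕ} (g : Euc d →L[ℝ] Euc d) :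
    |LinearMap.det (g.toLinearMap)| ≤ (d.factorial : ℝ) * ‖g‖ ^ d := by
  classical
  set b := (EuclideanSpace.basisFun (Fin d) ℝ).toBasis
  set A := LinearMap.toMatrix b b g.toLinearMap
  have hdet : LinearMap.det g.toLinearMap = A.det := by
    rw [← LinearMap.det_toMatrix b]
  have hx : ∀ i j, |A i j| ≤ ‖g‖ := by
    intro i j
    have hA : A i j = (g (b j)) i := by
      simp [A, LinearMap.toMatrix_apply, b]
    rw [hA]
    calc |(g (b j)) i| ≤ ‖g (b j)‖ := coord_le_norm _ _
      _ ≤ ‖g‖ * ‖b j‖ := ContinuousLinearMap.le_opNorm g _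
      _ = ‖g‖ := by
          have : ‖b j‖ = 1 := by
            rw [show b j = EuclideanSpace.single j (1:ℝ) from by
              simp [b, EuclideanSpace.basisFun_apply]]
            rw [EuclideanSpace.norm_single]; norm_num
          rw [this, mul_one]
  have h := Matrix.det_le (abv := AbsoluteValue.abs (S := ℝ)) hx
  rw [hdet]
  simp only [AbsoluteValue.abs_apply, Fintype.card_fin, nsmul_eq_mul] at h
  exact h


lemma conorm_smul_le {d : ℕ} (T : Euc d →L[ℝ] Euc d) (w : Euc d) {c : ℝ}
    (hc : c ≤ conorm T) : c * ‖w‖ ≤ ‖T w‖ := by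
  rcases eq_or_ne w 0 with rfl | hw
  · simp
  · have hnw : (0:ℝ) < ‖w‖ := norm_pos_iff.mpr hw
    set v : Euc d := ‖w‖⁻¹ • w with hv
    have hvnorm : ‖v‖ = 1 := by
      rw [hv, norm_smul, norm_inv, norm_norm, inv_mul_cancel₀ hnw.ne']
    have hmem : ‖T v‖ ∈ ((fun v => ‖T v‖) '' {v : Euc d | ‖v‖ = 1}) :=
      ⟨v, hvnorm, rfl⟩
    have hbdd : BddBelow ((fun v => ‖T v‖) '' {v : Euc d | ‖v‖ = 1}) :=
      ⟨0, fun x ⟨u, _, hu⟩ => hu ▸ norm_nonneg _⟩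
    have h1 : conorm T ≤ ‖T v‖ := csInf_le hbdd hmem
    have h2 : ‖T v‖ = ‖w‖⁻¹ * ‖T w‖ := by
      rw [hv, map_smul, norm_smul, norm_inv, norm_norm]
    have : c ≤ ‖w‖⁻¹ * ‖T w‖ := le_trans hc (h2 ▸ h1)
    calc c * ‖w‖ ≤ (‖w‖⁻¹ * ‖T w‖) * ‖w‖ := by
          exact mul_le_mul_of_nonneg_right this hnw.le
      _ = ‖T w‖ := by field_simp

lemma blockProd_coe {d : ℕ} (D : ℕ → (Euc d ≃L[ℝ] Euc d)) (i k : ℕ) :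
    (blockProd D i (k+1) : Euc d →L[ℝ] Euc d) =
      (D (i+k+1) : Euc d →L[ℝ] Euc d).comp (blockProd D i k : Euc d →L[ℝ] Euc d) := rfl

lemma blockProd_norm_le {d : ℕ} (D : ℕ → (Euc d ≃L[ℝ] Euc d)) (i : ℕ) {lamU : ℝ}
    (hU : 0 ≤ lamU) (h : ∀ j, ‖(D j : Euc d →L[ℝ] Euc d)‖ ≤ lamU) (K : ℕ) :
    ‖(blockProd D i K : Euc d →L[ℝ] Euc d)‖ ≤ lamU ^ K := by
  induction K with
  | zero =>
    simp only [blockProd, pow_zero, ContinuousLinearEquiv.coe_refl]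
    exact ContinuousLinearMap.norm_id_le
  | succ k ih =>
    rw [blockProd_coe, pow_succ]
    calc ‖(D (i+k+1) : Euc d →L[ℝ] Euc d).comp (blockProd D i k : Euc d →L[ℝ] Euc d)‖
        ≤ ‖(D (i+k+1) : Euc d →L[ℝ] Euc d)‖ * ‖(blockProd D i k : Euc d →L[ℝ] Euc d)‖ :=
          ContinuousLinearMap.opNorm_comp_le _ _
      _ ≤ lamU * lamU ^ k :=
          mul_le_mul (h _) ih (norm_nonneg _) hU
      _ = lamU ^ k * lamU := mul_comm _ _

lemma blockProd_lower {d : ℕ} (D : ℕ → (Euc d ≃L[ℝ] Euc d)) (i : ℕ) {lamL : ℝ}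
    (hL : 0 ≤ lamL) (h : ∀ j, lamL ≤ conorm (D j : Euc d →L[ℝ] Euc d)) (K : ℕ)
    (v : Euc d) : lamL ^ K * ‖v‖ ≤ ‖(blockProd D i K : Euc d →L[ℝ] Euc d) v‖ := by
  induction K with
  | zero => simp [blockProd]
  | succ k ih =>
    rw [blockProd_coe]
    have h1 := conorm_smul_le (D (i+k+1) : Euc d →L[ℝ] Euc d)
      ((blockProd D i k : Euc d →L[ℝ] Euc d) v) (h (i+k+1))
    calc lamL ^ (k+1) * ‖v‖ = lamL * (lamL ^ k * ‖v‖) := by ring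
      _ ≤ lamL * ‖(blockProd D i k : Euc d →L[ℝ] Euc d) v‖ :=
          mul_le_mul_of_nonneg_left ih hL
      _ ≤ ‖(D (i+k+1) : Euc d →L[ℝ] Euc d) ((blockProd D i k : Euc d →L[ℝ] Euc d) v)‖ := h1
      _ = ‖((D (i+k+1) : Euc d →L[ℝ] Euc d).comp (blockProd D i k : Euc d →L[ℝ] Euc d)) v‖ := rfl

lemma blockProd_norm_ge {d : ℕ} (hd : 1 ≤ d) (D : ℕ → (Euc d ≃L[ℝ] Euc d)) (i : ℕ) {lamL : ℝ}
    (hL : 0 ≤ lamL) (h : ∀ j, lamL ≤ conorm (D j : Euc d →L[ℝ] Euc d)) (K : ℕ) :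
    lamL ^ K ≤ ‖(blockProd D i K : Euc d →L[ℝ] Euc d)‖ := by
  set v : Euc d := EuclideanSpace.single (⟨0, hd⟩ : Fin d) (1:ℝ) with hv
  have hvn : ‖v‖ = 1 := by rw [hv, EuclideanSpace.norm_single]; norm_num
  have h1 := blockProd_lower D i hL h K v
  rw [hvn, mul_one] at h1
  exact h1.trans ((blockProd D i K : Euc d →L[ℝ] Euc d).le_opNorm v |>.trans
    (by rw [hvn, mul_one]))

lemma cdet_mul_symm {d : ℕ} (e : Euc d ≃L[ℝ] Euc d) : cdet e * cdet e.symm = 1 := by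
  unfold cdet
  rw [← LinearMap.det_comp]
  have : ((e : Euc d →L[ℝ] Euc d).toLinearMap) ∘ₗ ((e.symm : Euc d →L[ℝ] Euc d).toLinearMap)
      = LinearMap.id := by
    ext w; simp
  rw [this, LinearMap.det_id]

theorem stmt5 (d : ℕ) (hd : 1 ≤ d) (κ lamL lamU α' : ℝ)
    (hκ : 1 ≤ κ) (h0 : 0 < lamL) (h1 : lamL < lamU) (h2 : lamU < 1) (hα' : 0 < α') :
    ∃ (K : ℕ) (τ : ℝ), 1 ≤ K ∧ 0 < τ ∧
      ∀ D : ℕ → (Euc d ≃L[ℝ] Euc d),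
        (∀ i, lamL ≤ conorm (D i : Euc d →L[ℝ] Euc d) ∧
          ‖(D i : Euc d →L[ℝ] Euc d)‖ ≤ lamU) →
        (∀ i : ℕ, IsConformal (κ ^ 2) (blockProd D i K)) →
        ∀ i : ℕ,
          (‖(blockProd D i K : Euc d →L[ℝ] Euc d)‖ + τ) ^ (1 + α') ≤
            |cdet (blockProd D i K)| ^ ((1 : ℝ) / d) := by
  have hdR : (0:ℝ) < d := by exact_mod_cast hd
  have hκ0 : (0:ℝ) < κ := lt_of_lt_of_le one_pos hκ
  have hκ2 : (1:ℝ) ≤ κ ^ 2 := one_le_pow₀ hκ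
  have hc1 : (1:ℝ) ≤ (d.factorial : ℝ) := by exact_mod_cast d.factorial_pos
  set c : ℝ := (d.factorial : ℝ) with hc
  set C : ℝ := c ^ ((1:ℝ)/d) with hC
  have hC1 : (1:ℝ) ≤ C := Real.one_le_rpow hc1 (by positivity)
  have hC0 : (0:ℝ) < C := lt_of_lt_of_le one_pos hC1
  have hCd : C ^ d = c := by
    rw [hC, ← Real.rpow_natCast (c ^ ((1:ℝ)/d)) d, ← Real.rpow_mul (by positivity),
      one_div, inv_mul_cancel₀ hdR.ne', Real.rpow_one]
  set ε : ℝ := 1 / (2 * κ ^ 2 * C) with hε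
  have hε0 : 0 < ε := by positivity
  have hU0 : (0:ℝ) < lamU := h0.trans h1
  -- choose K
  obtain ⟨n, hn⟩ := exists_pow_lt_of_lt_one (show (0:ℝ) < ε ^ ((1:ℝ)/α') / 2 by positivity) h2
  set K : ℕ := max n 1 with hK
  have hKn : lamU ^ K ≤ lamU ^ n := pow_le_pow_of_le_one hU0.le h2.le (le_max_left n 1)
  have hKey : (2 * lamU ^ K) ^ α' ≤ ε := by
    have h2l : 2 * lamU ^ K ≤ ε ^ ((1:ℝ)/α') := by nlinarith [hKn, hn]
    calc (2 * lamU ^ K) ^ α' ≤ (ε ^ ((1:ℝ)/α')) ^ α' :=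
          Real.rpow_le_rpow (by positivity) h2l hα'.le
      _ = ε := by
          rw [← Real.rpow_mul hε0.le, one_div, inv_mul_cancel₀ hα'.ne', Real.rpow_one]
  refine ⟨K, lamL ^ K, le_max_right n 1, by positivity, ?_⟩
  intro D hDb hconf i
  set P := blockProd D i K with hP
  set s : ℝ := ‖(P : Euc d →L[ℝ] Euc d)‖ with hs
  have hs1 : lamL ^ K ≤ s := blockProd_norm_ge hd D i h0.le (fun j => (hDb j).1) K
  have hs2 : s ≤ lamU ^ K := blockProd_norm_le D i hU0.le (fun j => (hDb j).2) K
  have hs0 : 0 < s := lt_of_lt_of_le (by positivity) hs1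
  -- conformality: ‖P.symm‖ ≤ κ²/s
  have hconfi := hconf i
  unfold IsConformal at hconfi
  have hsymm : ‖(P.symm : Euc d →L[ℝ] Euc d)‖ ≤ κ ^ 2 / s := by
    rw [le_div_iff₀ hs0]
    calc ‖(P.symm : Euc d →L[ℝ] Euc d)‖ * s = s * ‖(P.symm : Euc d →L[ℝ] Euc d)‖ := mul_comm _ _
      _ ≤ κ ^ 2 := hconfi
  -- determinant lower bound
  have hdet1 : |cdet P.symm| ≤ c * (κ ^ 2 / s) ^ d := by
    calc |cdet P.symm| ≤ c * ‖(P.symm : Euc d →L[ℝ] Euc d)‖ ^ d := det_le_fact_norm _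
      _ ≤ c * (κ ^ 2 / s) ^ d := by
          exact mul_le_mul_of_nonneg_left (pow_le_pow_left₀ (norm_nonneg _) hsymm d)
            (by positivity)
  have hdprod : |cdet P| * |cdet P.symm| = 1 := by
    rw [← abs_mul, cdet_mul_symm, abs_one]
  have hdsymm0 : 0 < |cdet P.symm| := by
    rcases (abs_nonneg (cdet P.symm)).lt_or_eq with h | h
    · exact h
    · exfalso; rw [← h] at hdprod; simp at hdprod
  have hdetlow : (s / (C * κ ^ 2)) ^ d ≤ |cdet P| := by
    have key : (s / (C * κ ^ 2)) ^ d * (c * (κ ^ 2 / s) ^ d) = 1 := by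
      rw [← hCd]
      rw [← mul_pow, ← mul_pow]
      rw [show s / (C * κ ^ 2) * (C * (κ ^ 2 / s)) = 1 by field_simp, one_pow]
    have hle1 : (s / (C * κ ^ 2)) ^ d * |cdet P.symm| ≤ 1 :=
      le_of_le_of_eq
        (mul_le_mul_of_nonneg_left hdet1 (by positivity)) key
    have heq : |cdet P| = 1 / |cdet P.symm| := by
      field_simp
      linarith [hdprod]
    rw [heq]
    exact (le_div_iff₀ hdsymm0).mpr hle1
  have hroot : s / (C * κ ^ 2) ≤ |cdet P| ^ ((1:ℝ)/d) := by
    have ha : (0:ℝ) ≤ s / (C * κ ^ 2) := by positivity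
    calc s / (C * κ ^ 2) = ((s / (C * κ ^ 2)) ^ d) ^ ((1:ℝ)/d) := by
          rw [← Real.rpow_natCast (s / (C * κ ^ 2)) d, ← Real.rpow_mul ha,
            mul_one_div, div_self hdR.ne', Real.rpow_one]
      _ ≤ |cdet P| ^ ((1:ℝ)/d) :=
          Real.rpow_le_rpow (by positivity) hdetlow (by positivity)
  -- final chain
  have hτs : lamL ^ K ≤ s := hs1
  have hsum : s + lamL ^ K ≤ 2 * s := by linarith
  have hsum2 : s + lamL ^ K ≤ 2 * lamU ^ K := by nlinarith
  have hpos : 0 < s + lamL ^ K := by positivity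
  calc (s + lamL ^ K) ^ (1 + α')
      = (s + lamL ^ K) * (s + lamL ^ K) ^ α' := by
        rw [Real.rpow_add hpos, Real.rpow_one]
    _ ≤ (2 * s) * ε := by
        apply mul_le_mul hsum _ (Real.rpow_nonneg hpos.le _) (by positivity)
        calc (s + lamL ^ K) ^ α' ≤ (2 * lamU ^ K) ^ α' :=
              Real.rpow_le_rpow hpos.le hsum2 hα'.le
          _ ≤ ε := hKey
    _ = s / (C * κ ^ 2) := by rw [hε]; field_simp
    _ ≤ |cdet P| ^ ((1:ℝ)/d) := hroot
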